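/- Let Δ be a lower saturated subset of ℝ≥0^n, N a positive integer, Δ_N := Δ ∩ [0,N]^n, and for a positive integer m let Σ_{N,m} := Δ ∩ (J_{N,m})^n where J_{N,m} := { j/m : 0 ≤ j ≤ mN }. Set Δ_{N,m} := ⋃_{φ∈Σ_{N,m}} I_φ and Δ'_{N,m} := ⋃_{(a₁,...,aₙ)∈Σ_{N,m}} [a₁,a₁+1/m] × ⋯ × [aₙ,aₙ+1/m]. Then vol(Δ'_{N,m} \ Δ_{N,m}) ≤ n(1+N)^{n−1}/m. -/

import Mathlib

/-- A subset of `ℝ≥0^n` is lower saturated if it contains the origin and contains the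
full coordinate box `[0,ξ₁] × ⋯ × [0,ξₙ]` below each of its points. -/
def lowerSat {n : ℕ} (Δ : Set (Fin n → ℝ)) : Prop :=
  (fun _ => (0 : ℝ)) ∈ Δ ∧ ∀ φ ∈ Δ, ∀ ξ : Fin n → ℝ, (∀ i, 0 ≤ ξ i ∧ ξ i ≤ φ i) → ξ ∈ Δ

/-- A subset of `ℤ≥0^n` is lower `ℤ≥0`-saturated if it contains the origin and is
downward closed for the componentwise order. -/
def lowerSatZ {n : ℕ} (S : Set (Fin n → ℕ)) : Prop :=
  (fun _ => 0) ∈ S ∧ ∀ γ ∈ S, ∀ δ : Fin n → ℕ, (∀ i, δ i ≤ γ i) → δ ∈ S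

/-- `Δ(Σ) = ⋃_{γ ∈ Σ} [0,γ₁] × ⋯ × [0,γₙ]`. -/
def DeltaOf {n : ℕ} (S : Set (Fin n → ℕ)) : Set (Fin n → ℝ) :=
  {ξ | ∃ γ ∈ S, ∀ i, 0 ≤ ξ i ∧ ξ i ≤ (γ i : ℝ)}

/-- `Δ'(Σ) = ⋃_{γ ∈ Σ} [γ₁,γ₁+1) × ⋯ × [γₙ,γₙ+1)`. -/
def Delta'Of {n : ℕ} (S : Set (Fin n → ℕ)) : Set (Fin n → ℝ) :=
  {ξ | ∃ γ ∈ S, ∀ i, (γ i : ℝ) ≤ ξ i ∧ ξ i < (γ i : ℝ) + 1}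

lemma count_aux (n' M : ℕ) (T : Set (Fin (n' + 1) → ℕ))
    [DecidablePred (· ∈ T)]
    (hdown : ∀ b ∈ T, ∀ c : Fin (n' + 1) → ℕ, (∀ i, c i ≤ b i) → c ∈ T) :
    ((Fintype.piFinset fun _ : Fin (n' + 1) => Finset.Iic M).filter
        (fun b => b ∈ T ∧ (fun i => b i + 1) ∉ T)).card ≤ (n' + 1) * (M + 1) ^ n' := by
  classical
  set s := (Fintype.piFinset fun _ : Fin (n' + 1) => Finset.Iic M).filter
        (fun b => b ∈ T ∧ (fun i => b i + 1) ∉ T) with hs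
  have hmem : ∀ b ∈ s, (∀ i, b i ≤ M) ∧ b ∈ T ∧ (fun i => b i + 1) ∉ T := by
    intro b hb
    rw [hs, Finset.mem_filter, Fintype.mem_piFinset] at hb
    exact ⟨fun i => Finset.mem_Iic.mp (hb.1 i), hb.2⟩
  let k : (Fin (n' + 1) → ℕ) → ℕ := fun b => Finset.univ.inf' Finset.univ_nonempty b
  have hk_le : ∀ b i, k b ≤ b i := fun b i => Finset.inf'_le _ (Finset.mem_univ i)
  let g : (Fin (n' + 1) → ℕ) → (Fin (n' + 1) → ℕ) := fun b i => b i - k b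
  have hkey : ∀ b ∈ s, ∀ b' ∈ s, g b = g b' → b = b' := by
    intro b hb b' hb' h
    obtain ⟨hbM, hbT, hbnT⟩ := hmem b hb
    obtain ⟨hbM', hbT', hbnT'⟩ := hmem b' hb'
    rcases lt_trichotomy (k b) (k b') with h1 | h1 | h1
    · exact absurd (hdown b' hbT' _ (fun i => by
        have h2 := congrFun h i; simp only [g] at h2
        have := hk_le b i; have := hk_le b' i; omega)) hbnT
    · funext i
      have h2 := congrFun h i; simp only [g] at h2
      have := hk_le b i; have := hk_le b' i; omega
    · exact absurd (hdown b hbT _ (fun i => by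
        have h2 := congrFun h i; simp only [g] at h2
        have := hk_le b i; have := hk_le b' i; omega)) hbnT'
  have hex : ∀ b : Fin (n' + 1) → ℕ, ∃ i, b i = k b := by
    intro b
    obtain ⟨i, -, hi⟩ := Finset.exists_mem_eq_inf' Finset.univ_nonempty b
    exact ⟨i, hi.symm⟩
  let i0 : (Fin (n' + 1) → ℕ) → Fin (n' + 1) := fun b => (hex b).choose
  have hi0 : ∀ b, b (i0 b) = k b := fun b => (hex b).choose_spec
  have hg0 : ∀ b, g b (i0 b) = 0 := fun b => by
    simp only [g]; rw [hi0 b]; omega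
  let φ : (Fin (n' + 1) → ℕ) → Fin (n' + 1) × (Fin n' → ℕ) :=
    fun b => (i0 b, fun j => g b ((i0 b).succAbove j))
  have hcard := Finset.card_le_card_of_injOn φ
      (t := Finset.univ ×ˢ Fintype.piFinset fun _ : Fin n' => Finset.Iic M)
      (fun b hb => by
        obtain ⟨hbM, -, -⟩ := hmem b hb
        simp only [φ, Finset.mem_coe, Finset.mem_product, Finset.mem_univ, true_and, Fintype.mem_piFinset,
          Finset.mem_Iic]
        intro j
        exact le_trans (Nat.sub_le _ _) (hbM _))
      (fun b hb b' hb' h => by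
        have h1 : i0 b = i0 b' := congrArg Prod.fst h
        have h2 := congrArg Prod.snd h
        refine hkey b hb b' hb' (funext fun i => ?_)
        by_cases hi : i = i0 b
        · rw [hi, hg0 b, h1, hg0 b']
        · obtain ⟨j, hj⟩ := Fin.exists_succAbove_eq hi
          have h3 := congrFun h2 j
          simp only [φ] at h3
          rw [← hj, h3, h1])
  calc s.card ≤ (Finset.univ ×ˢ Fintype.piFinset fun _ : Fin n' => Finset.Iic M).card := hcard
    _ = (n' + 1) * (M + 1) ^ n' := by
        simp [Finset.card_product, Fintype.card_piFinset]

/-- Let `Δ ⊆ ℝ≥0^n` be lower saturated, `N, m` positive integers,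
`Σ_{N,m} = Δ ∩ (J_{N,m})^n` the grid points of `Δ`, `Δ_{N,m} = ⋃_{φ∈Σ_{N,m}} I_φ` and
`Δ'_{N,m} = ⋃_{a∈Σ_{N,m}} [a₁,a₁+1/m] × ⋯ × [aₙ,aₙ+1/m]`. Then
`vol(Δ'_{N,m} \ Δ_{N,m}) ≤ n(1+N)^{n−1}/m`. -/
theorem stmt17 (n : ℕ) (Δ : Set (Fin n → ℝ)) (hΔ : lowerSat Δ)
    (hΔpos : ∀ ξ ∈ Δ, ∀ i, 0 ≤ ξ i) (N m : ℕ) (hN : 0 < N) (hm : 0 < m) :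
    MeasureTheory.volume
      ({ξ : Fin n → ℝ | ∃ a : Fin n → ℝ,
          (a ∈ Δ ∧ ∀ i, ∃ j : ℕ, j ≤ m * N ∧ a i = (j : ℝ) / m) ∧
          ∀ i, a i ≤ ξ i ∧ ξ i ≤ a i + 1 / m} \
       {ξ : Fin n → ℝ | ∃ φ : Fin n → ℝ,
          (φ ∈ Δ ∧ ∀ i, ∃ j : ℕ, j ≤ m * N ∧ φ i = (j : ℝ) / m) ∧
          ∀ i, 0 ≤ ξ i ∧ ξ i ≤ φ i})
      ≤ ENNReal.ofReal (n * (1 + N) ^ (n - 1) / m) := by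
  classical
  rcases n with _ | n'
  · have huniv : ∀ ξ : Fin 0 → ℝ, ξ ∈ {ξ : Fin 0 → ℝ | ∃ φ : Fin 0 → ℝ,
        (φ ∈ Δ ∧ ∀ i, ∃ j : ℕ, j ≤ m * N ∧ φ i = (j : ℝ) / m) ∧
        ∀ i, 0 ≤ ξ i ∧ ξ i ≤ φ i} :=
      fun ξ => ⟨fun _ => 0, ⟨hΔ.1, fun i => i.elim0⟩, fun i => i.elim0⟩
    rw [Set.diff_eq_empty.mpr (fun ξ _ => huniv ξ)]
    simp
  · simp only [Nat.add_sub_cancel]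
    have hm' : (0:ℝ) < m := by exact_mod_cast hm
    set M := m * N with hM
    set T : Set (Fin (n' + 1) → ℕ) :=
      {b | (∀ i, b i ≤ M) ∧ (fun i => (b i : ℝ) / m) ∈ Δ} with hT
    have hdown : ∀ b ∈ T, ∀ c : Fin (n' + 1) → ℕ, (∀ i, c i ≤ b i) → c ∈ T := by
      intro b hb c hc
      refine ⟨fun i => le_trans (hc i) (hb.1 i), ?_⟩
      refine hΔ.2 _ hb.2 _ fun i => ⟨by positivity, ?_⟩
      exact (div_le_div_iff_of_pos_right hm').mpr (by exact_mod_cast hc i)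
    set BF := (Fintype.piFinset fun _ : Fin (n' + 1) => Finset.Iic M).filter
        (fun b => b ∈ T ∧ (fun i => b i + 1) ∉ T) with hBF
    have hcard : BF.card ≤ (n' + 1) * (M + 1) ^ n' := count_aux n' M T hdown
    have hvol : ∀ b : Fin (n' + 1) → ℕ,
        MeasureTheory.volume (Set.pi Set.univ fun i =>
          Set.Icc ((b i : ℝ)/m) ((b i : ℝ)/m + 1/m)) = ENNReal.ofReal ((1/(m:ℝ))^(n'+1)) := by
      intro b
      rw [MeasureTheory.volume_pi_pi]
      have h1 : ∀ i : Fin (n'+1), MeasureTheory.volume (Set.Icc ((b i : ℝ)/m) ((b i : ℝ)/m + 1/m))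
          = ENNReal.ofReal (1/(m:ℝ)) := by
        intro i; rw [Real.volume_Icc]; congr 1; ring
      rw [Finset.prod_congr rfl (fun i _ => h1 i), Finset.prod_const, Finset.card_univ,
        Fintype.card_fin, ← ENNReal.ofReal_pow (by positivity)]
    have hsub : ({ξ : Fin (n'+1) → ℝ | ∃ a : Fin (n'+1) → ℝ,
          (a ∈ Δ ∧ ∀ i, ∃ j : ℕ, j ≤ m * N ∧ a i = (j : ℝ) / m) ∧
          ∀ i, a i ≤ ξ i ∧ ξ i ≤ a i + 1 / m} \
        {ξ : Fin (n'+1) → ℝ | ∃ φ : Fin (n'+1) → ℝ,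
          (φ ∈ Δ ∧ ∀ i, ∃ j : ℕ, j ≤ m * N ∧ φ i = (j : ℝ) / m) ∧
          ∀ i, 0 ≤ ξ i ∧ ξ i ≤ φ i})
        ⊆ ⋃ b ∈ BF, Set.pi Set.univ fun i => Set.Icc ((b i : ℝ)/m) ((b i : ℝ)/m + 1/m) := by
      rintro ξ ⟨⟨a, ⟨haΔ, hgrid⟩, hbox⟩, hnot⟩
      choose b hble heq using hgrid
      have hab : a = fun i => (b i : ℝ) / m := funext heq
      have hbT : b ∈ T := ⟨hble, by rw [← hab]; exact haΔ⟩
      have hbnT : (fun i => b i + 1) ∉ T := by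
        rintro ⟨h1, h2⟩
        refine hnot ⟨fun i => ((b i : ℝ) + 1) / m, ⟨?_, fun i => ⟨b i + 1, h1 i, by push_cast; ring⟩⟩,
          fun i => ⟨le_trans (by rw [heq i]; positivity) (hbox i).1, ?_⟩⟩
        · have he : (fun i => ((b i : ℝ) + 1) / m) = (fun i => ((b i + 1 : ℕ) : ℝ) / m) := by
            funext i; push_cast; ring
          rw [he]; exact h2
        · have h3 := (hbox i).2
          rw [heq i] at h3
          calc ξ i ≤ (b i : ℝ)/m + 1/m := h3
            _ = ((b i : ℝ) + 1)/m := by ring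
      have hb1 : b ∈ BF := by
        rw [hBF, Finset.mem_filter, Fintype.mem_piFinset]
        exact ⟨fun i => Finset.mem_Iic.mpr (hble i), hbT, hbnT⟩
      have hb2 : ξ ∈ Set.pi Set.univ fun i => Set.Icc ((b i : ℝ)/m) ((b i : ℝ)/m + 1/m) := by
        rw [Set.mem_univ_pi]
        intro i
        rw [Set.mem_Icc, ← heq i]
        exact hbox i
      exact Set.mem_biUnion hb1 hb2
    calc MeasureTheory.volume _
        ≤ MeasureTheory.volume (⋃ b ∈ BF, Set.pi Set.univ fun i =>
            Set.Icc ((b i : ℝ)/m) ((b i : ℝ)/m + 1/m)) := MeasureTheory.measure_mono hsub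
      _ ≤ ∑ b ∈ BF, MeasureTheory.volume (Set.pi Set.univ fun i =>
            Set.Icc ((b i : ℝ)/m) ((b i : ℝ)/m + 1/m)) :=
          MeasureTheory.measure_biUnion_finset_le _ _
      _ = BF.card * ENNReal.ofReal ((1/(m:ℝ))^(n'+1)) := by
          rw [Finset.sum_congr rfl (fun b _ => hvol b), Finset.sum_const, nsmul_eq_mul]
      _ ≤ ((n' + 1) * (M + 1) ^ n' : ℕ) * ENNReal.ofReal ((1/(m:ℝ))^(n'+1)) := by
          gcongr
      _ ≤ ENNReal.ofReal ((n' + 1 : ℕ) * (1 + (N:ℝ)) ^ n' / m) := by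
          rw [← ENNReal.ofReal_natCast ((n' + 1) * (M + 1) ^ n'),
            ← ENNReal.ofReal_mul (by positivity)]
          apply ENNReal.ofReal_le_ofReal
          have h2 : (1:ℝ) ≤ m := by exact_mod_cast hm
          have h1 : ((m:ℝ) * N + 1) / m ≤ 1 + N := by
            rw [div_le_iff₀ hm']
            nlinarith
          have heq2 : (((n' + 1) * (M + 1) ^ n' : ℕ) : ℝ) * (1/(m:ℝ))^(n'+1)
              = ((n':ℝ) + 1) * (((m:ℝ) * N + 1)/m)^n' * (1/m) := by
            push_cast [hM]
            simp only [div_pow]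
            ring
          rw [heq2]
          calc ((n':ℝ) + 1) * (((m:ℝ) * N + 1)/m)^n' * (1/m)
              ≤ ((n':ℝ) + 1) * (1 + (N:ℝ))^n' * (1/m) := by
                gcongr
            _ = ((n' + 1 : ℕ) : ℝ) * (1 + (N:ℝ)) ^ n' / m := by push_cast; ring
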